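/- Assume |M|_{ℓ¹} ≤ 1 with m_{ij} ≠ 0 for all i, j ∈ {1,…,N}, and that there exist k₁ ∈ {1,…,N} and k₂ ∈ {1,…,N_d} with L_{k₁}/L_{k₂} irrational. Let T ≥ μ > 0 and σ ∈ (0,1). Then there exist C ≥ 1, γ > 0, and K ∈ ℕ, K ≥ 1, such that for every 𝔫 ∈ 𝔑 satisfying min_{i} n_i ≥ K and n_k > σ |𝔫|_{ℓ¹} for all k ∈ {1,…,N}, every i, j ∈ {1,…,N}, every x ∈ [0, L_j], every t ∈ ℝ, and every choice of signals α_k ∈ G(T,μ) for k ∈ {1,…,N_d}, one has |θ^{(i)}_{j,𝔫,x,t}| ≤ C e^{−γ |𝔫|_{ℓ¹}}. -/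

import Mathlib

open MeasureTheory Finset

noncomputable def Lsum {N : ℕ} (L : Fin N → ℝ) (n : Fin N → ℕ) : ℝ :=
  ∑ i, (n i : ℝ) * L i

noncomputable def eps {N : ℕ} (L a b : Fin N → ℝ) (α : Fin N → ℝ → ℝ)
    (j : Fin N) (n : Fin N → ℕ) (x t : ℝ) : ℝ :=
  Real.exp (- ∫ s in Set.Icc (t - Lsum L n - L j + max x (a j)) (t - Lsum L n - L j + b j), α j s)

def IsTheta {N : ℕ} (L a b : Fin N → ℝ) (m : Fin N → Fin N → ℝ) (α : Fin N → ℝ → ℝ)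
    (θ : Fin N → Fin N → (Fin N → ℕ) → ℝ → ℝ → ℝ) : Prop :=
  (∀ i j n x t, θ i j n x t = eps L a b α j n x t * θ i j n (L j) t) ∧
  (∀ i j t, θ i j (fun _ => 0) (L j) t = m i j) ∧
  (∀ i j n t, n ≠ (fun _ => 0) → θ i j n (L j) t =
    ∑ k ∈ Finset.univ.filter (fun k => 1 ≤ n k),
      m k j * θ i k (fun l => n l - if l = k then 1 else 0) 0 t)

def PEsignal (T μ : ℝ) (α : ℝ → ℝ) : Prop :=
  Measurable α ∧ (∀ s, α s ∈ Set.Icc (0:ℝ) 1) ∧ ∀ t : ℝ, μ ≤ ∫ s in t..(t + T), α s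

noncomputable def fracMod (x y : ℝ) : ℝ := x - ⌊x / y⌋ * y

lemma my_integrableOn (α : ℝ → ℝ) (hm : Measurable α) (hb : ∀ s, α s ∈ Set.Icc (0:ℝ) 1)
    (s : Set ℝ) (hfin : volume s ≠ ⊤) : IntegrableOn α s := by
  refine Measure.integrableOn_of_bounded (M := 1) hfin hm.aestronglyMeasurable ?_
  refine Filter.Eventually.of_forall fun x => ?_
  rw [Real.norm_eq_abs, abs_le]
  exact ⟨by linarith [(hb x).1], (hb x).2⟩

lemma my_intervalIntegrable (α : ℝ → ℝ) (hm : Measurable α) (hb : ∀ s, α s ∈ Set.Icc (0:ℝ) 1)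
    (u v : ℝ) : IntervalIntegrable α volume u v := by
  rw [intervalIntegrable_iff]
  refine my_integrableOn α hm hb _ ?_
  rw [Set.uIoc]
  exact measure_Ioc_lt_top.ne

lemma dense_combo (L₁ L₂ : ℝ) (hL₂ : 0 < L₂) (hirr : Irrational (L₁ / L₂)) :
    Dense ({x : ℝ | ∃ p q : ℤ, x = p * L₁ + q * L₂}) := by
  set S : AddSubgroup ℝ :=
    { carrier := {x | ∃ p q : ℤ, x = p * L₁ + q * L₂}
      zero_mem' := ⟨0, 0, by push_cast; ring⟩
      add_mem' := by rintro x y ⟨p1, q1, rfl⟩ ⟨p2, q2, rfl⟩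
                     exact ⟨p1+p2, q1+q2, by push_cast; ring⟩
      neg_mem' := by rintro x ⟨p, q, rfl⟩; exact ⟨-p, -q, by push_cast; ring⟩ } with hSdef
  have hcoe : (S : Set ℝ) = {x : ℝ | ∃ p q : ℤ, x = p * L₁ + q * L₂} := rfl
  rw [← hcoe]
  rcases S.dense_or_cyclic with h | ⟨g, hg⟩
  · exact h
  · exfalso
    have h1 : L₁ ∈ S := ⟨1, 0, by push_cast; ring⟩
    have h2 : L₂ ∈ S := ⟨0, 1, by push_cast; ring⟩
    rw [hg, AddSubgroup.mem_closure_singleton] at h1 h2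
    obtain ⟨p, hp⟩ := h1; obtain ⟨q, hq⟩ := h2
    have hg0 : g ≠ 0 := by
      rintro rfl; rw [smul_zero] at hq; exact hL₂.ne' hq.symm
    have hq0 : (q:ℝ) ≠ 0 := by
      intro h
      rw [zsmul_eq_mul, h, zero_mul] at hq
      exact hL₂.ne' hq.symm
    have hratio : L₁ / L₂ = (p : ℝ) / q := by
      rw [← hp, ← hq, zsmul_eq_mul, zsmul_eq_mul, mul_comm (p:ℝ) g, mul_comm (q:ℝ) g,
        mul_div_mul_left _ _ hg0]
    exact hirr ⟨(p : ℚ) / (q : ℚ), by push_cast; rw [hratio]⟩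

lemma star (L₁ L₂ : ℝ) (hL₁ : 0 < L₁) (hL₂ : 0 < L₂) (hirr : Irrational (L₁ / L₂))
    (ℓ T μ : ℝ) (hℓ : 0 < ℓ) (hμ : 0 < μ) (hTμ : μ ≤ T) :
    ∃ (R₀ : ℕ) (μ' : ℝ), 0 < μ' ∧ ∀ (α : ℝ → ℝ), Measurable α → (∀ s, α s ∈ Set.Icc (0:ℝ) 1) →
      (∀ t : ℝ, μ ≤ ∫ s in t..(t + T), α s) → ∀ c : ℝ, ∃ q₁ q₂ : ℕ, q₁ + q₂ ≤ R₀ ∧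
        μ' ≤ ∫ s in Set.Icc (c + q₁ * L₁ + q₂ * L₂) (c + q₁ * L₁ + q₂ * L₂ + ℓ), α s := by
  have hT : 0 < T := lt_of_lt_of_le hμ hTμ
  obtain ⟨h, hhS, hh⟩ : ∃ h ∈ ({x : ℝ | ∃ p q : ℤ, x = p * L₁ + q * L₂}),
      h ∈ Set.Ioo 0 (ℓ/2) := by
    rcases (dense_combo L₁ L₂ hL₂ hirr).exists_mem_open
      (isOpen_Ioo : IsOpen (Set.Ioo (0:ℝ) (ℓ/2)))
      (Set.nonempty_Ioo.mpr (by linarith)) with ⟨x, h1, h2⟩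
    exact ⟨x, h1, h2⟩
  obtain ⟨ph, qh, hrep⟩ := hhS
  have hpos : 0 < h := hh.1
  have hlt : h < ℓ/2 := hh.2
  clear hh
  set Kmax : ℕ := ⌈T / h⌉₊ + 1 with hKmax
  set R₁ : ℕ := (Kmax + 1) * (ph.natAbs + qh.natAbs) with hR₁
  set M : ℕ := max 1 ⌈(2*T)/ℓ⌉₊ with hM
  have hM0 : 0 < M := lt_of_lt_of_le one_pos (le_max_left _ _)
  have hMR : (0:ℝ) < (M:ℝ) := by exact_mod_cast hM0
  refine ⟨4 * R₁, μ / M, div_pos hμ hMR, ?_⟩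
  intro α hm hb hPE c
  have hTM0 : 0 < T / M := div_pos hT hMR
  have hTM : T / M ≤ ℓ / 2 := by
    have h2 : (2*T)/ℓ ≤ (M:ℝ) := le_trans (Nat.le_ceil _)
      (by exact_mod_cast le_max_right 1 ⌈(2*T)/ℓ⌉₊)
    rw [div_le_iff₀ hℓ] at h2
    rw [div_le_div_iff₀ hMR two_pos]
    nlinarith
  set B : ℝ := (R₁:ℝ) * L₁ + (R₁:ℝ) * L₂ with hB
  set f : ℕ → ℝ := fun jj => c + B + jj*(T/M) with hf
  have hsum : ∑ jj ∈ Finset.range M, ∫ s in (f jj)..(f (jj+1)), α s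
      = ∫ s in (f 0)..(f M), α s :=
    intervalIntegral.sum_integral_adjacent_intervals
      (fun k _ => my_intervalIntegrable α hm hb _ _)
  have hfM : f M = c + B + T := by
    simp only [hf]
    rw [mul_div_cancel₀ _ hMR.ne']
  have hPE' : ∑ jj ∈ Finset.range M, (μ / M) ≤
      ∑ jj ∈ Finset.range M, ∫ s in (f jj)..(f (jj+1)), α s := by
    rw [hsum]
    rw [Finset.sum_const, Finset.card_range, nsmul_eq_mul, mul_div_cancel₀ _ hMR.ne']
    have h0 := hPE (c + B)
    have hf0 : f 0 = c + B := by simp [hf]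
    rw [hf0, hfM]
    exact h0
  obtain ⟨j₀, hj₀mem, hj₀⟩ := Finset.exists_le_of_sum_le
    (Finset.nonempty_range_iff.mpr hM0.ne') hPE'
  clear hPE' hsum hPE
  have hj₀M : (j₀ : ℝ) + 1 ≤ M := by
    have := Finset.mem_range.mp hj₀mem
    exact_mod_cast this
  set u : ℝ := (j₀ : ℝ) * (T/M) with hu
  have hu0 : 0 ≤ u := mul_nonneg (Nat.cast_nonneg _) hTM0.le
  have huT : u + T/M ≤ T := by
    have h3 : ((j₀:ℝ) + 1) * (T/M) ≤ (M:ℝ) * (T/M) :=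
      mul_le_mul_of_nonneg_right hj₀M hTM0.le
    rw [mul_div_cancel₀ _ hMR.ne'] at h3
    nlinarith
  set k : ℕ := ⌊u / h⌋₊ with hk
  have hk1 : (k:ℝ) * h ≤ u := by
    have h4 := Nat.floor_le (div_nonneg hu0 hpos.le)
    calc (k:ℝ) * h ≤ (u/h) * h := mul_le_mul_of_nonneg_right h4 hpos.le
    _ = u := by field_simp
  have hk2 : u < ((k:ℝ) + 1) * h := by
    have h5 := Nat.lt_floor_add_one (u / h)
    calc u = (u/h) * h := by field_simp
    _ < ((k:ℝ)+1) * h := by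
        apply mul_lt_mul_of_pos_right _ hpos
        exact_mod_cast h5
  have hkK : k ≤ Kmax := by
    have h6 : u / h ≤ T / h := by gcongr <;> linarith
    calc k = ⌊u/h⌋₊ := rfl
    _ ≤ ⌊T/h⌋₊ := Nat.floor_mono h6
    _ ≤ ⌈T/h⌉₊ := Nat.floor_le_ceil _
    _ ≤ Kmax := by omega
  have habs1 : |(k:ℤ) * ph| ≤ (R₁:ℤ) := by
    rw [abs_mul, abs_of_nonneg (Int.natCast_nonneg k)]
    have h7 : (R₁:ℤ) = ((Kmax:ℤ) + 1) * (|ph| + |qh|) := by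
      rw [hR₁]; push_cast [Int.natCast_natAbs]; ring
    rw [h7]
    have hkZ : (k:ℤ) ≤ (Kmax:ℤ) := by exact_mod_cast hkK
    apply mul_le_mul (by omega) (le_add_of_nonneg_right (abs_nonneg qh))
      (abs_nonneg _) (by positivity)
  have habs2 : |(k:ℤ) * qh| ≤ (R₁:ℤ) := by
    rw [abs_mul, abs_of_nonneg (Int.natCast_nonneg k)]
    have h7 : (R₁:ℤ) = ((Kmax:ℤ) + 1) * (|ph| + |qh|) := by
      rw [hR₁]; push_cast [Int.natCast_natAbs]; ring
    rw [h7]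
    have hkZ : (k:ℤ) ≤ (Kmax:ℤ) := by exact_mod_cast hkK
    apply mul_le_mul (by omega) (le_add_of_nonneg_left (abs_nonneg ph))
      (abs_nonneg _) (by positivity)
  have hq₁0 : (0:ℤ) ≤ (R₁:ℤ) + k * ph := by
    have := (abs_le.mp habs1).1; linarith
  have hq₂0 : (0:ℤ) ≤ (R₁:ℤ) + k * qh := by
    have := (abs_le.mp habs2).1; linarith
  refine ⟨((R₁:ℤ) + k * ph).toNat, ((R₁:ℤ) + k * qh).toNat, ?_, ?_⟩
  · have e1 : (((R₁:ℤ) + k * ph).toNat : ℤ) = (R₁:ℤ) + k * ph := Int.toNat_of_nonneg hq₁0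
    have e2 : (((R₁:ℤ) + k * qh).toNat : ℤ) = (R₁:ℤ) + k * qh := Int.toNat_of_nonneg hq₂0
    have h8 : (((R₁:ℤ) + k * ph).toNat : ℤ) + (((R₁:ℤ) + k * qh).toNat : ℤ) ≤ 4 * (R₁:ℤ) := by
      rw [e1, e2]
      have := (abs_le.mp habs1).2
      have := (abs_le.mp habs2).2
      linarith
    exact_mod_cast h8
  · have e1 : ((((R₁:ℤ) + k * ph).toNat : ℕ) : ℝ) = (R₁:ℝ) + (k:ℝ) * (ph:ℝ) := by
      have := Int.toNat_of_nonneg hq₁0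
      exact_mod_cast congrArg (Int.cast : ℤ → ℝ) this
    have e2 : ((((R₁:ℤ) + k * qh).toNat : ℕ) : ℝ) = (R₁:ℝ) + (k:ℝ) * (qh:ℝ) := by
      have := Int.toNat_of_nonneg hq₂0
      exact_mod_cast congrArg (Int.cast : ℤ → ℝ) this
    have hx : c + (((R₁:ℤ) + k * ph).toNat : ℕ) * L₁ + (((R₁:ℤ) + k * qh).toNat : ℕ) * L₂
        = c + B + k * h := by
      rw [e1, e2, hrep, hB]; ring
    rw [hx]
    have hle : f j₀ ≤ f (j₀+1) := by
      simp only [hf]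
      push_cast
      have h9 : (j₀:ℝ) * (T/M) ≤ ((j₀:ℝ)+1) * (T/M) := by nlinarith
      linarith
    rw [intervalIntegral.integral_of_le hle] at hj₀
    have hfj₀ : f j₀ = c + B + u := by simp [hf, hu]
    have hfj₀' : f (j₀+1) = c + B + (u + T/M) := by
      simp only [hf, hu]; push_cast; ring
    have hsubset : Set.Ioc (f j₀) (f (j₀+1)) ⊆
        Set.Icc (c + B + k*h) (c + B + k*h + ℓ) := by
      rw [hfj₀, hfj₀']
      intro s hs
      obtain ⟨hs1, hs2⟩ := hs
      constructor
      · linarith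
      · linarith
    calc μ / M ≤ ∫ s in Set.Ioc (f j₀) (f (j₀+1)), α s := hj₀
    _ ≤ ∫ s in Set.Icc (c + B + k*h) (c + B + k*h + ℓ), α s := by
        apply setIntegral_mono_set
        · exact my_integrableOn α hm hb _ measure_Icc_lt_top.ne
        · exact Filter.Eventually.of_forall fun x => (hb x).1
        · exact HasSubset.Subset.eventuallyLE hsubset

lemma sum_sub_single {N : ℕ} (w : Fin N → ℕ) (k : Fin N) (hk : 1 ≤ w k) :
    (∑ l, (w l - if l = k then 1 else 0)) + 1 = ∑ l, w l := by
  rw [← Finset.sum_erase_add Finset.univ w (Finset.mem_univ k),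
      ← Finset.sum_erase_add Finset.univ (fun l => w l - if l = k then 1 else 0)
        (Finset.mem_univ k)]
  have h3 : ∑ l ∈ Finset.univ.erase k, (w l - if l = k then 1 else 0)
      = ∑ l ∈ Finset.univ.erase k, w l :=
    Finset.sum_congr rfl fun l hl => by
      rw [if_neg (Finset.ne_of_mem_erase hl), Nat.sub_zero]
  rw [h3, if_pos rfl]
  omega

lemma count_cons_eq {β : Type*} [DecidableEq β] (x y : β) (l : List β) :
    (y :: l).count x = l.count x + if x = y then 1 else 0 := by
  rcases eq_or_ne x y with rfl | h
  · simp [List.count_cons]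
  · simp [List.count_cons, h, Ne.symm h]

lemma count_replicate_eq {β : Type*} [DecidableEq β] (x y : β) (nn : ℕ) :
    (List.replicate nn y).count x = if x = y then nn else 0 := by
  rcases eq_or_ne x y with rfl | h
  · simp [List.count_replicate]
  · simp [List.count_replicate, h, Ne.symm h]

set_option maxHeartbeats 2000000 in
theorem stmt4 {N Nd : ℕ} (hN : 2 ≤ N) (hNd1 : 1 ≤ Nd) (hNdN : Nd ≤ N)
    (L a b : Fin N → ℝ) (m : Fin N → Fin N → ℝ)
    (hL : ∀ i, 0 < L i)
    (hab : ∀ j : Fin N, (j : ℕ) < Nd → 0 ≤ a j ∧ a j < b j ∧ b j ≤ L j)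
    (hab' : ∀ j : Fin N, Nd ≤ (j : ℕ) → a j = L j ∧ b j = L j)
    (hM : ∀ j, ∑ i, |m i j| ≤ 1)
    (hMne : ∀ i j, m i j ≠ 0)
    (k₁ k₂ : Fin N) (hk₂ : (k₂ : ℕ) < Nd) (hirr : Irrational (L k₁ / L k₂))
    (T μ : ℝ) (hμ : 0 < μ) (hTμ : μ ≤ T)
    (σ : ℝ) (hσ : σ ∈ Set.Ioo (0:ℝ) 1) :
    ∃ (C γ : ℝ) (K : ℕ), 1 ≤ C ∧ 0 < γ ∧ 1 ≤ K ∧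
      ∀ n : Fin N → ℕ, (∀ i, K ≤ n i) → (∀ k, σ * ∑ i, (n i : ℝ) < n k) →
      ∀ (i j : Fin N) (x t : ℝ), x ∈ Set.Icc 0 (L j) →
      ∀ α : Fin N → ℝ → ℝ,
        (∀ k : Fin N, (k : ℕ) < Nd → PEsignal T μ (α k)) →
        (∀ j : Fin N, Nd ≤ (j : ℕ) → ∀ s, α j s = 1) →
        (∀ j, Measurable (α j)) → (∀ j s, α j s ∈ Set.Icc (0:ℝ) 1) →
        ∀ θ : Fin N → Fin N → (Fin N → ℕ) → ℝ → ℝ → ℝ, IsTheta L a b m α θ →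
          |θ i j n x t| ≤ C * Real.exp (-γ * ∑ i, (n i : ℝ)) := by
  haveI hNk : Nonempty (Fin N) := ⟨⟨0, by omega⟩⟩
  obtain ⟨ha₂0, hab₂, hbL₂⟩ := hab k₂ hk₂
  have hk12 : k₁ ≠ k₂ := by
    intro h
    rw [h] at hirr
    exact hirr ⟨1, by rw [Rat.cast_one, div_self (hL k₂).ne']⟩
  obtain ⟨R₀, μ', hμ'pos, hstar⟩ := star (L k₁) (L k₂) (hL k₁) (hL k₂) hirr
    (b k₂ - a k₂) T μ (by linarith) hμ hTμ
  set R : ℕ := R₀ + 1 with hR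
  have hR0 : 0 < R := Nat.succ_pos _
  set δ : ℝ := Finset.univ.inf' Finset.univ_nonempty
    (fun p : Fin N × Fin N => |m p.1 p.2|) with hδ
  have hδle : ∀ k j : Fin N, δ ≤ |m k j| := fun k j =>
    Finset.inf'_le _ (Finset.mem_univ (k, j))
  have hδpos : 0 < δ := by
    rw [hδ, Finset.lt_inf'_iff]
    exact fun p _ => abs_pos.mpr (hMne p.1 p.2)
  have hmle1 : ∀ k j : Fin N, |m k j| ≤ 1 := fun k j =>
    le_trans (Finset.single_le_sum (f := fun i => |m i j|)
      (fun i _ => abs_nonneg _) (Finset.mem_univ k)) (hM j)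
  have hδ1 : δ ≤ 1 := le_trans (hδle k₁ k₁) (hmle1 _ _)
  set E : ℝ := Real.exp (-μ') with hE
  have hE0 : 0 < E := Real.exp_pos _
  have hE1 : E < 1 := by
    calc E < Real.exp 0 := Real.exp_lt_exp.mpr (by linarith)
    _ = 1 := Real.exp_zero
  set ρ : ℝ := 1 - δ ^ R * (1 - E) with hρ
  have hρ1 : ρ < 1 := by
    have h1 : 0 < δ ^ R * (1 - E) := mul_pos (pow_pos hδpos _) (by linarith)
    rw [hρ]; linarith
  have hρ0 : 0 < ρ := by
    have h1 : δ ^ R ≤ 1 := pow_le_one₀ hδpos.le hδ1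
    have h2 : δ ^ R * (1 - E) ≤ 1 * (1 - E) := mul_le_mul_of_nonneg_right h1 (by linarith)
    rw [hρ]; linarith
  have hρle1 : ρ ≤ 1 := hρ1.le
  set ν : (Fin N → ℕ) → ℕ := fun w => (Finset.univ.inf' Finset.univ_nonempty w) / R with hν
  have hlogρ : Real.log ρ < 0 := Real.log_neg hρ0 hρ1
  have hRpos : (0:ℝ) < (R:ℝ) := by exact_mod_cast hR0
  refine ⟨1/ρ, σ * (-Real.log ρ) / R, 1, (le_div_iff₀ hρ0).mpr (by linarith), ?_, le_refl 1, ?_⟩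
  · apply div_pos (mul_pos hσ.1 (by linarith)) hRpos
  intro n hK hcen i j x t hx α hPE hα1 hαm hαb θ hθ
  obtain ⟨hθ1, hθ2, hθ3⟩ := hθ
  have heps_pos : ∀ (j' : Fin N) (n' : Fin N → ℕ) (x' t' : ℝ),
      0 < eps L a b α j' n' x' t' := fun _ _ _ _ => Real.exp_pos _
  have heps_le1 : ∀ (j' : Fin N) (n' : Fin N → ℕ) (x' t' : ℝ),
      eps L a b α j' n' x' t' ≤ 1 := by
    intro j' n' x' t'
    rw [eps]
    have hint : 0 ≤ ∫ s in Set.Icc (t' - Lsum L n' - L j' + max x' (a j'))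
        (t' - Lsum L n' - L j' + b j'), α j' s :=
      setIntegral_nonneg measurableSet_Icc (fun y _ => (hαb j' y).1)
    calc Real.exp (-∫ s in Set.Icc (t' - Lsum L n' - L j' + max x' (a j'))
          (t' - Lsum L n' - L j' + b j'), α j' s) ≤ Real.exp 0 :=
        Real.exp_le_exp.mpr (by linarith)
    _ = 1 := Real.exp_zero
  -- main induction
  have main : ∀ s : ℕ, ∀ n' : Fin N → ℕ, (∑ k, n' k) = s → ∀ (j' : Fin N) (t' : ℝ),
      |θ i j' n' (L j') t'| ≤ ρ ^ ν n' := by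
    intro s
    induction s using Nat.strong_induction_on with
    | _ s IH =>
    intro n' hs j' t'
    by_cases hz : n' = (fun _ => 0)
    · subst hz
      rw [hθ2 i j' t']
      have hν0 : ν (fun _ => 0) = 0 := by simp [hν]
      rw [hν0, pow_zero]
      exact hmle1 i j'
    have hexit : ∀ (w : Fin N → ℕ), (∑ kk, w kk) < s → ∀ (k : Fin N) (t'' : ℝ),
        |θ i k w 0 t''| ≤ ρ ^ ν w := by
      intro w hw k t''
      rw [hθ1 i k w 0 t'', abs_mul, abs_of_pos (heps_pos _ _ _ _)]
      calc eps L a b α k w 0 t'' * |θ i k w (L k) t''| ≤ 1 * (ρ ^ ν w) :=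
        mul_le_mul (heps_le1 _ _ _ _) (IH _ hw w rfl k t'') (abs_nonneg _) zero_le_one
      _ = ρ ^ ν w := one_mul _
    by_cases hν1 : ν n' = 0
    · rw [hθ3 i j' n' t' hz, hν1, pow_zero]
      calc |∑ k ∈ Finset.univ.filter (fun k => 1 ≤ n' k),
            m k j' * θ i k (fun l => n' l - if l = k then 1 else 0) 0 t'|
          ≤ ∑ k ∈ Finset.univ.filter (fun k => 1 ≤ n' k),
            |m k j' * θ i k (fun l => n' l - if l = k then 1 else 0) 0 t'| :=
          Finset.abs_sum_le_sum_abs _ _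
        _ ≤ ∑ k ∈ Finset.univ.filter (fun k => 1 ≤ n' k), |m k j'| := by
          apply Finset.sum_le_sum
          intro k hk
          rw [abs_mul]
          have hk' : 1 ≤ n' k := (Finset.mem_filter.mp hk).2
          have hsub : (∑ kk, (n' kk - if kk = k then 1 else 0)) < s := by
            have := sum_sub_single n' k hk'
            omega
          have hb1 : |θ i k (fun l => n' l - if l = k then 1 else 0) 0 t'| ≤ 1 := by
            calc |θ i k (fun l => n' l - if l = k then 1 else 0) 0 t'|
                ≤ ρ ^ ν (fun l => n' l - if l = k then 1 else 0) := hexit _ hsub k t'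
              _ ≤ 1 := pow_le_one₀ hρ0.le hρle1
          calc |m k j'| * |θ i k (fun l => n' l - if l = k then 1 else 0) 0 t'|
              ≤ |m k j'| * 1 := mul_le_mul_of_nonneg_left hb1 (abs_nonneg _)
            _ = |m k j'| := mul_one _
        _ ≤ ∑ k, |m k j'| := Finset.sum_le_sum_of_subset_of_nonneg
            (Finset.filter_subset _ _) (fun _ _ _ => abs_nonneg _)
        _ ≤ 1 := hM j'
    -- now ν n' ≥ 1
    have hν1' : 1 ≤ ν n' := Nat.one_le_iff_ne_zero.mpr hν1
    have hminR : ∀ k, R ≤ n' k := by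
      intro k
      have h1 : 1 ≤ (Finset.univ.inf' Finset.univ_nonempty n') / R := hν1'
      have h2 : R ≤ Finset.univ.inf' Finset.univ_nonempty n' :=
        (Nat.one_le_div_iff hR0).mp h1
      exact le_trans h2 (Finset.inf'_le _ (Finset.mem_univ k))
    set X : ℝ := ρ ^ (ν n' - 1) with hX
    have hX0 : 0 ≤ X := pow_nonneg hρ0.le _
    have expo : ∀ (w : Fin N → ℕ), (∀ k, n' k ≤ w k + R) → ρ ^ ν w ≤ X := by
      intro w hw
      rw [hX]
      apply pow_le_pow_of_le_one hρ0.le hρle1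
      obtain ⟨kw, _, hkw⟩ := Finset.exists_mem_eq_inf' Finset.univ_nonempty w
      have h2 : Finset.univ.inf' Finset.univ_nonempty n'
          ≤ Finset.univ.inf' Finset.univ_nonempty w + R := by
        calc Finset.univ.inf' Finset.univ_nonempty n' ≤ n' kw :=
            Finset.inf'_le _ (Finset.mem_univ kw)
        _ ≤ w kw + R := hw kw
        _ = Finset.univ.inf' Finset.univ_nonempty w + R := by rw [← hkw]
      have h3 : ν n' ≤ ν w + 1 := by
        simp only [hν]
        calc (Finset.univ.inf' Finset.univ_nonempty n') / R
            ≤ (Finset.univ.inf' Finset.univ_nonempty w + R) / R := Nat.div_le_div_right h2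
          _ = (Finset.univ.inf' Finset.univ_nonempty w) / R + 1 := Nat.add_div_right _ hR0
      omega
    -- inner block lemma
    have inner : ∀ (p : List (Fin N)) (j'' : Fin N) (n'' : Fin N → ℕ),
        p ≠ [] →
        (∀ k, p.count k ≤ n'' k) →
        (∀ k, n' k + p.length ≤ n'' k + R) →
        ((∑ kk, n'' kk) ≤ s) →
        p.length ≤ R →
        (∀ (hne : p ≠ []) (nf : Fin N → ℕ), (∀ k, nf k + p.count k = n'' k) →
          eps L a b α (p.getLast hne) nf 0 t' ≤ E) →
        |θ i j'' n'' (L j'') t'| ≤ (1 - δ ^ p.length * (1 - E)) * X := by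
      intro p
      induction p with
      | nil => intro j'' n'' hne; exact absurd rfl hne
      | cons kh tl IHp =>
        intro j'' n'' _ hcnt hinv hsum' hlen hfin
        have hk1 : 1 ≤ n'' kh := by
          have hc := hcnt kh
          rw [count_cons_eq, if_pos rfl] at hc
          omega
        have hne0 : n'' ≠ (fun _ => 0) := by
          intro h
          have := congrFun h kh
          omega
        have hsum1 : 1 ≤ ∑ kk, n'' kk :=
          le_trans hk1 (Finset.single_le_sum (fun _ _ => Nat.zero_le _) (Finset.mem_univ kh))
        -- bound for exits (any k with n'' k ≥ 1)
        have hexit2 : ∀ k : Fin N, 1 ≤ n'' k →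
            |θ i k (fun l => n'' l - if l = k then 1 else 0) 0 t'| ≤ X := by
          intro k hk
          have hsub : (∑ kk, (n'' kk - if kk = k then 1 else 0)) < s := by
            have := sum_sub_single n'' k hk
            omega
          refine le_trans (hexit _ hsub k t') (expo _ ?_)
          intro k'
          have h5 := hinv k'
          simp only [List.length_cons] at h5
          show n' k' ≤ n'' k' - (if k' = k then 1 else 0) + R
          by_cases hkk : k' = k
          · subst hkk
            simp
            omega
          · simp only [if_neg hkk]
            omega
        -- bound for the good branch
        have hYbound : |θ i kh (fun l => n'' l - if l = kh then 1 else 0) 0 t'| ≤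
            (1 - δ ^ tl.length * (1 - E)) * X := by
          rw [hθ1, abs_mul, abs_of_pos (heps_pos _ _ _ _)]
          by_cases htl : tl = []
          · subst htl
            have heE : eps L a b α kh (fun l => n'' l - if l = kh then 1 else 0) 0 t' ≤ E := by
              have hgl : ([kh] : List (Fin N)).getLast (by simp) = kh := rfl
              have := hfin (by simp) (fun l => n'' l - if l = kh then 1 else 0) ?_
              · rwa [hgl] at this
              · intro k
                simp only [List.count_cons, List.count_nil, beq_iff_eq]
                by_cases hkk : k = kh
                · subst hkk
                  simp
                  omega
                · simp only [if_neg hkk, if_neg (Ne.symm hkk)]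
                  omega
            have hθX : |θ i kh (fun l => n'' l - if l = kh then 1 else 0) (L kh) t'| ≤ X := by
              have hsub : (∑ kk, (n'' kk - if kk = kh then 1 else 0)) < s := by
                have := sum_sub_single n'' kh hk1
                omega
              refine le_trans (IH _ hsub _ rfl kh t') (expo _ ?_)
              intro k'
              have h5 := hinv k'
              simp only [List.length_cons, List.length_nil] at h5
              show n' k' ≤ n'' k' - (if k' = kh then 1 else 0) + R
              by_cases hkk : k' = kh
              · subst hkk
                simp
                omega
              · simp only [if_neg hkk]
                omega
            calc eps L a b α kh (fun l => n'' l - if l = kh then 1 else 0) 0 t' *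
                |θ i kh (fun l => n'' l - if l = kh then 1 else 0) (L kh) t'|
                ≤ E * X := mul_le_mul heE hθX (abs_nonneg _) hE0.le
              _ = (1 - δ ^ ([] : List (Fin N)).length * (1 - E)) * X := by
                  simp only [List.length_nil, pow_zero, one_mul]
                  ring
          · have hIH := IHp kh (fun l => n'' l - if l = kh then 1 else 0) htl ?_ ?_ ?_ ?_ ?_
            · calc eps L a b α kh (fun l => n'' l - if l = kh then 1 else 0) 0 t' *
                  |θ i kh (fun l => n'' l - if l = kh then 1 else 0) (L kh) t'|
                  ≤ 1 * ((1 - δ ^ tl.length * (1 - E)) * X) := by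
                    apply mul_le_mul (heps_le1 _ _ _ _) hIH (abs_nonneg _) zero_le_one
                _ = (1 - δ ^ tl.length * (1 - E)) * X := one_mul _
            · intro k
              have h6 := hcnt k
              rw [count_cons_eq] at h6
              show tl.count k ≤ n'' k - (if k = kh then 1 else 0)
              by_cases hkk : k = kh
              · subst hkk
                simp at h6 ⊢
                omega
              · simp only [if_neg hkk] at h6 ⊢
                omega
            · intro k
              have h6 := hinv k
              simp only [List.length_cons] at h6
              show n' k + tl.length ≤ n'' k - (if k = kh then 1 else 0) + R
              by_cases hkk : k = kh
              · subst hkk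
                simp
                omega
              · simp only [if_neg hkk]
                omega
            · show (∑ kk, (n'' kk - if kk = kh then 1 else 0)) ≤ s
              have := sum_sub_single n'' kh hk1
              omega
            · simp only [List.length_cons] at hlen
              omega
            · intro hne nf hnf
              have hgl : (kh :: tl).getLast (by simp) = tl.getLast hne := List.getLast_cons hne
              have h8 : ∀ k, nf k + (kh :: tl).count k = n'' k := by
                intro k
                have h9 : nf k + tl.count k = n'' k - if k = kh then 1 else 0 := hnf k
                rw [count_cons_eq]
                by_cases hkk : k = kh
                · subst hkk
                  simp at h9 ⊢
                  omega
                · simp only [if_neg hkk] at h9 ⊢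
                  omega
              have := hfin (by simp) nf h8
              rwa [hgl] at this
        -- combine
        rw [hθ3 i j'' n'' t' hne0]
        have hfil : kh ∈ Finset.univ.filter (fun k => 1 ≤ n'' k) :=
          Finset.mem_filter.mpr ⟨Finset.mem_univ _, hk1⟩
        have habs : |∑ k ∈ Finset.univ.filter (fun k => 1 ≤ n'' k),
            m k j'' * θ i k (fun l => n'' l - if l = k then 1 else 0) 0 t'|
            ≤ ∑ k ∈ Finset.univ.filter (fun k => 1 ≤ n'' k),
            |m k j''| * |θ i k (fun l => n'' l - if l = k then 1 else 0) 0 t'| := by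
          refine le_trans (Finset.abs_sum_le_sum_abs _ _) ?_
          refine le_of_eq (Finset.sum_congr rfl fun k _ => abs_mul _ _)
        set F : Fin N → ℝ :=
          fun k => |m k j''| * |θ i k (fun l => n'' l - if l = k then 1 else 0) 0 t'| with hF
        have hsplit : ∑ k ∈ (Finset.univ.filter (fun k => 1 ≤ n'' k)).erase kh, F k + F kh
            = ∑ k ∈ Finset.univ.filter (fun k => 1 ≤ n'' k), F k :=
          Finset.sum_erase_add _ _ hfil
        have herase : ∑ k ∈ (Finset.univ.filter (fun k => 1 ≤ n'' k)).erase kh, F k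
            ≤ (∑ k ∈ (Finset.univ.filter (fun k => 1 ≤ n'' k)).erase kh, |m k j''|) * X := by
          rw [Finset.sum_mul]
          refine Finset.sum_le_sum fun k hk => ?_
          have hk' : 1 ≤ n'' k := (Finset.mem_filter.mp (Finset.mem_of_mem_erase hk)).2
          exact mul_le_mul_of_nonneg_left (hexit2 k hk') (abs_nonneg _)
        have hsummle : ∑ k ∈ (Finset.univ.filter (fun k => 1 ≤ n'' k)).erase kh, |m k j''|
            ≤ 1 - |m kh j''| := by
          have h11 : ∑ k ∈ (Finset.univ.filter (fun k => 1 ≤ n'' k)).erase kh, |m k j''|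
              + |m kh j''| = ∑ k ∈ Finset.univ.filter (fun k => 1 ≤ n'' k), |m k j''| :=
            Finset.sum_erase_add _ _ hfil
          have h12 : ∑ k ∈ Finset.univ.filter (fun k => 1 ≤ n'' k), |m k j''| ≤ 1 :=
            le_trans (Finset.sum_le_sum_of_subset_of_nonneg (Finset.filter_subset _ _)
              (fun _ _ _ => abs_nonneg _)) (hM j'')
          linarith
        have hFkh : F kh ≤ |m kh j''| * ((1 - δ ^ tl.length * (1 - E)) * X) :=
          mul_le_mul_of_nonneg_left hYbound (abs_nonneg _)
        have hc0 : 0 ≤ δ ^ tl.length * (1 - E) :=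
          mul_nonneg (pow_nonneg hδpos.le _) (by linarith)
        have hkey : δ * (δ ^ tl.length * (1 - E) * X) ≤ |m kh j''| * (δ ^ tl.length * (1 - E) * X) :=
          mul_le_mul_of_nonneg_right (hδle kh j'') (mul_nonneg hc0 hX0)
        have hXer : (∑ k ∈ (Finset.univ.filter (fun k => 1 ≤ n'' k)).erase kh, |m k j''|) * X
            ≤ (1 - |m kh j''|) * X := mul_le_mul_of_nonneg_right hsummle hX0
        calc |∑ k ∈ Finset.univ.filter (fun k => 1 ≤ n'' k),
              m k j'' * θ i k (fun l => n'' l - if l = k then 1 else 0) 0 t'|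
            ≤ ∑ k ∈ Finset.univ.filter (fun k => 1 ≤ n'' k), F k := habs
          _ = ∑ k ∈ (Finset.univ.filter (fun k => 1 ≤ n'' k)).erase kh, F k + F kh := hsplit.symm
          _ ≤ (1 - |m kh j''|) * X + |m kh j''| * ((1 - δ ^ tl.length * (1 - E)) * X) := by
              have := le_trans herase hXer
              linarith
          _ ≤ (1 - δ ^ (kh :: tl).length * (1 - E)) * X := by
              simp only [List.length_cons, pow_succ]
              nlinarith [hkey]
    -- use the good block
    obtain ⟨q₁, q₂, hqle, hqint⟩ := hstar (α k₂) (hαm k₂) (hαb k₂) (hPE k₂ hk₂).2.2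
      (t' - Lsum L n' + a k₂)
    set p : List (Fin N) := (List.replicate q₁ k₁ ++ List.replicate q₂ k₂) ++ [k₂] with hp
    have hpne : p ≠ [] := by simp [hp]
    have hplen : p.length = q₁ + q₂ + 1 := by
      rw [hp]
      simp only [List.length_append, List.length_replicate, List.length_cons, List.length_nil]
    have hlenR : p.length ≤ R := by rw [hplen, hR]; omega
    have hcount : ∀ k, p.count k
        = (if k = k₁ then q₁ else 0) + (if k = k₂ then q₂ + 1 else 0) := by
      intro k
      rw [hp, List.count_append, List.count_append, count_replicate_eq, count_replicate_eq,
        count_cons_eq, List.count_nil]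
      by_cases h1 : k = k₁
      · have h2 : ¬ k = k₂ := by rw [h1]; exact hk12
        simp only [if_pos h1, if_neg h2]
      · by_cases h2 : k = k₂
        · simp only [if_neg h1, if_pos h2]
          omega
        · simp only [if_neg h1, if_neg h2]

    have hlast : p.getLast hpne = k₂ := List.getLast_append _
    have hfin : ∀ (hne : p ≠ []) (nf : Fin N → ℕ), (∀ k, nf k + p.count k = n' k) →
        eps L a b α (p.getLast hne) nf 0 t' ≤ E := by
      intro hne nf hnf
      rw [hlast]
      have hLsum : Lsum L nf = Lsum L n' - ((q₁:ℝ) * L k₁ + ((q₂:ℝ)+1) * L k₂) := by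
        have hsplit : ∀ k, (n' k : ℝ) = (nf k : ℝ) + (p.count k : ℝ) := fun k => by
          exact_mod_cast congrArg (Nat.cast : ℕ → ℝ) (hnf k).symm
        have h13 : Lsum L n' = Lsum L nf + ∑ k, (p.count k : ℝ) * L k := by
          rw [Lsum, Lsum, ← Finset.sum_add_distrib]
          refine Finset.sum_congr rfl fun k _ => ?_
          rw [hsplit k]; ring
        have h14 : ∑ k, (p.count k : ℝ) * L k = (q₁:ℝ) * L k₁ + ((q₂:ℝ)+1) * L k₂ := by
          have h15 : ∀ k, (p.count k : ℝ) * L k =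
              (if k = k₁ then (q₁:ℝ) * L k else 0) + (if k = k₂ then ((q₂:ℝ)+1) * L k else 0) := by
            intro k
            rw [hcount k]
            by_cases h1 : k = k₁
            · have h2 : ¬ k = k₂ := by rw [h1]; exact hk12
              simp only [if_pos h1, if_neg h2]
              push_cast
              ring
            · by_cases h2 : k = k₂
              · simp only [if_neg h1, if_pos h2]
                push_cast
                ring
              · simp only [if_neg h1, if_neg h2]
                push_cast
                ring
          rw [Finset.sum_congr rfl fun k _ => h15 k, Finset.sum_add_distrib,
            Finset.sum_ite_eq' Finset.univ k₁ (fun k => (q₁:ℝ) * L k),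
            Finset.sum_ite_eq' Finset.univ k₂ (fun k => ((q₂:ℝ)+1) * L k)]
          rw [if_pos (Finset.mem_univ k₁), if_pos (Finset.mem_univ k₂)]
        rw [h13, h14]; ring
      rw [eps]
      have hmax : max (0:ℝ) (a k₂) = a k₂ := max_eq_right ha₂0
      rw [hmax]
      have hA : t' - Lsum L nf - L k₂ + a k₂
          = (t' - Lsum L n' + a k₂) + (q₁:ℝ) * L k₁ + (q₂:ℝ) * L k₂ := by
        rw [hLsum]; ring
      have hB' : t' - Lsum L nf - L k₂ + b k₂
          = ((t' - Lsum L n' + a k₂) + (q₁:ℝ) * L k₁ + (q₂:ℝ) * L k₂) + (b k₂ - a k₂) := by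
        rw [hLsum]; ring
      rw [hA, hB']
      calc Real.exp (-∫ s in Set.Icc ((t' - Lsum L n' + a k₂) + (q₁:ℝ) * L k₁ + (q₂:ℝ) * L k₂)
            (((t' - Lsum L n' + a k₂) + (q₁:ℝ) * L k₁ + (q₂:ℝ) * L k₂) + (b k₂ - a k₂)), α k₂ s)
          ≤ Real.exp (-μ') := Real.exp_le_exp.mpr (by linarith [hqint])
        _ = E := rfl
    have hmain := inner p j' n' hpne
      (fun k => le_trans List.count_le_length (le_trans hlenR (hminR k)))
      (fun k => Nat.add_le_add_left hlenR _)
      (le_of_eq hs) hlenR hfin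
    have hfac : (1 - δ ^ p.length * (1 - E)) ≤ ρ := by
      rw [hρ]
      have h16 : δ ^ R ≤ δ ^ p.length := pow_le_pow_of_le_one hδpos.le hδ1 hlenR
      nlinarith [hE1.le]
    calc |θ i j' n' (L j') t'| ≤ (1 - δ ^ p.length * (1 - E)) * X := hmain
      _ ≤ ρ * X := mul_le_mul_of_nonneg_right hfac hX0
      _ = ρ ^ ν n' := by
          rw [hX, ← pow_succ', Nat.sub_add_cancel hν1']
  -- conclude
  have hbound := main (∑ kk, n kk) n rfl j t
  have hfinal : |θ i j n x t| ≤ ρ ^ ν n := by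
    rw [hθ1 i j n x t, abs_mul, abs_of_pos (heps_pos _ _ _ _)]
    calc eps L a b α j n x t * |θ i j n (L j) t| ≤ 1 * (ρ ^ ν n) :=
      mul_le_mul (heps_le1 _ _ _ _) hbound (abs_nonneg _) zero_le_one
    _ = ρ ^ ν n := one_mul _
  refine le_trans hfinal ?_
  obtain ⟨kmin, _, hkmin⟩ := Finset.exists_mem_eq_inf' Finset.univ_nonempty n
  have hmin : σ * ∑ kk, ((n kk : ℝ)) < ((Finset.univ.inf' Finset.univ_nonempty n : ℕ) : ℝ) := by
    rw [hkmin]; exact_mod_cast hcen kmin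
  have h10 : Finset.univ.inf' Finset.univ_nonempty n + 1 ≤ (ν n + 1) * R := by
    have h17 := Nat.lt_mul_div_succ (Finset.univ.inf' Finset.univ_nonempty n) hR0
    simp only [hν]
    calc Finset.univ.inf' Finset.univ_nonempty n + 1
        ≤ R * (Finset.univ.inf' Finset.univ_nonempty n / R + 1) := h17
      _ = (Finset.univ.inf' Finset.univ_nonempty n / R + 1) * R := Nat.mul_comm _ _
  have hνR : σ * ∑ kk, ((n kk : ℝ)) < (((ν n : ℕ) : ℝ) + 1) * R := by
    have h11 : ((Finset.univ.inf' Finset.univ_nonempty n : ℕ) : ℝ) + 1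
        ≤ (((ν n : ℕ) : ℝ) + 1) * (R:ℝ) := by exact_mod_cast h10
    linarith
  have hpow : ρ ^ (ν n + 1) = Real.exp ((((ν n : ℕ) : ℝ) + 1) * Real.log ρ) := by
    rw [← Real.exp_log (pow_pos hρ0 (ν n + 1)), Real.log_pow]
    push_cast
    ring_nf
  have hexp : ((((ν n : ℕ) : ℝ)) + 1) * Real.log ρ
      ≤ -(σ * (-Real.log ρ) / R) * ∑ kk, ((n kk : ℝ)) := by
    rw [show -(σ * (-Real.log ρ) / R) * ∑ kk, ((n kk : ℝ))
      = (σ * (∑ kk, ((n kk : ℝ))) / R) * Real.log ρ by ring]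
    apply mul_le_mul_of_nonpos_right ?_ hlogρ.le
    rw [div_le_iff₀ hRpos]
    linarith [hνR]
  calc ρ ^ ν n = (1/ρ) * ρ ^ (ν n + 1) := by
        rw [pow_succ]; field_simp
    _ ≤ (1/ρ) * Real.exp (-(σ * (-Real.log ρ) / R) * ∑ kk, ((n kk : ℝ))) := by
        apply mul_le_mul_of_nonneg_left ?_ (by positivity)
        rw [hpow]
        exact Real.exp_le_exp.mpr hexp
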